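/- Let A ∈ ℝ^{n×p} (p ≥ 1) have nonzero columns a₁, …, a_p, let R ∈ ℝ^{n×n} be symmetric positive definite, Q = R⁻¹, and ε ≥ 0. Let x ∈ ℝ^p with x ≥ 0 be such that y := ∑_{i=1}^p x_i a_i/‖a_i‖_Q satisfies ‖y‖_Q ≤ ε. Define R′ := (1/(1+ε)²)(R + ∑_{i=1}^p (x_i/‖a_i‖_Q²) a_i a_iᵀ), which is symmetric positive definite, and Q′ := (R′)⁻¹. Then for every v ∈ ℝⁿ there exists ν ∈ ℝ^p with ν ≥ 0 such that ‖v + Aν‖_Q ≤ ‖v‖_{Q′}. -/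

import Mathlib

open Matrix

noncomputable section

/-- `‖v‖_Q = √(vᵀ Q v)`, the norm induced by a symmetric positive definite `Q`. -/
noncomputable def Qnorm {n : ℕ} (Q : Matrix (Fin n) (Fin n) ℝ) (v : Fin n → ℝ) : ℝ :=
  Real.sqrt (v ⬝ᵥ Q.mulVec v)

/-- The rescaled matrix
`R' = (1/(1+ε)²) (R + ∑_i (x_i/‖a_i‖_Q²) a_i a_iᵀ)`, where `a_i` are the columns
of `A` and `Q = R⁻¹`. -/
noncomputable def rescaledR {n p : ℕ} (A : Matrix (Fin n) (Fin p) ℝ)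
    (R : Matrix (Fin n) (Fin n) ℝ) (ε : ℝ) (x : Fin p → ℝ) :
    Matrix (Fin n) (Fin n) ℝ :=
  ((1 + ε) ^ 2)⁻¹ •
    (R + ∑ i : Fin p,
      (x i / (Qnorm R⁻¹ (fun j => A j i)) ^ 2) •
        vecMulVec (fun j => A j i) (fun j => A j i))


lemma dotSymm {n : ℕ} {M : Matrix (Fin n) (Fin n) ℝ} (hM : Mᵀ = M) (u v : Fin n → ℝ) :
    u ⬝ᵥ M.mulVec v = v ⬝ᵥ M.mulVec u := by
  rw [Matrix.dotProduct_mulVec, ← Matrix.mulVec_transpose, hM, dotProduct_comm]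

lemma psd_nonneg {n : ℕ} {M : Matrix (Fin n) (Fin n) ℝ} (hM : M.PosSemidef) (v : Fin n → ℝ) :
    0 ≤ v ⬝ᵥ M.mulVec v := by simpa using hM.dotProduct_mulVec_nonneg v

lemma pd_transpose {n : ℕ} {M : Matrix (Fin n) (Fin n) ℝ} (hM : M.PosDef) : Mᵀ = M := by
  have := hM.isHermitian
  exact (Matrix.conjTranspose_eq_transpose_of_trivial M).symm.trans this

lemma cauchySchwarz {n : ℕ} {M : Matrix (Fin n) (Fin n) ℝ} (hM : M.PosSemidef)
    (u v : Fin n → ℝ) :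
    (u ⬝ᵥ M.mulVec v) ^ 2 ≤ (u ⬝ᵥ M.mulVec u) * (v ⬝ᵥ M.mulVec v) := by
  have hsym : Mᵀ = M := by
    have := hM.isHermitian
    exact (Matrix.conjTranspose_eq_transpose_of_trivial M).symm.trans this
  have h : ∀ t : ℝ, 0 ≤ (v ⬝ᵥ M.mulVec v) * (t * t) + (2 * (u ⬝ᵥ M.mulVec v)) * t
      + (u ⬝ᵥ M.mulVec u) := by
    intro t
    have h0 := psd_nonneg hM (u + t • v)
    have hexp : (u + t • v) ⬝ᵥ M.mulVec (u + t • v)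
        = (v ⬝ᵥ M.mulVec v) * (t * t) + (2 * (u ⬝ᵥ M.mulVec v)) * t + (u ⬝ᵥ M.mulVec u) := by
      rw [Matrix.mulVec_add, dotProduct_add, add_dotProduct,
        add_dotProduct, Matrix.mulVec_smul, dotProduct_smul,
        smul_dotProduct, smul_dotProduct, dotProduct_smul,
        dotSymm hsym v u]
      simp only [smul_eq_mul]
      ring
    rw [hexp] at h0
    linarith
  have hd := discrim_le_zero h
  rw [discrim] at hd
  nlinarith [hd]

lemma smul_posDef {n : ℕ} {M : Matrix (Fin n) (Fin n) ℝ} (hM : M.PosDef) {c : ℝ} (hc : 0 < c) :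
    (c • M).PosDef := by
  refine Matrix.PosDef.of_dotProduct_mulVec_pos ?_ (fun x hx => ?_)
  · have h := hM.isHermitian
    unfold Matrix.IsHermitian at h ⊢
    rw [Matrix.conjTranspose_smul, h]
    simp
  · have := hM.dotProduct_mulVec_pos hx
    simp only [star_trivial] at this ⊢
    rw [Matrix.smul_mulVec, dotProduct_smul]
    exact mul_pos hc (by simpa using this)

lemma mulVec_vecMulVec {n : ℕ} (u w v : Fin n → ℝ) :
    (vecMulVec u w).mulVec v = (w ⬝ᵥ v) • u := by
  ext j
  simp [Matrix.mulVec, Matrix.vecMulVec_apply, dotProduct, Finset.sum_mul,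
    Finset.mul_sum, mul_comm, mul_assoc, mul_left_comm]

lemma psd_sum_vecMulVec {n p : ℕ} (c : Fin p → ℝ) (hc : ∀ i, 0 ≤ c i) (b : Fin p → Fin n → ℝ) :
    (∑ i, c i • vecMulVec (b i) (b i)).PosSemidef := by
  have key : ∀ i : Fin p, (c i • vecMulVec (b i) (b i)).PosSemidef := by
    intro i
    refine Matrix.PosSemidef.of_dotProduct_mulVec_nonneg ?_ ?_
    · unfold Matrix.IsHermitian
      ext j k
      simp [Matrix.conjTranspose_apply, Matrix.vecMulVec_apply, mul_comm]
    · intro x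
      simp only [star_trivial, Matrix.smul_mulVec, dotProduct_smul,
        mulVec_vecMulVec, smul_eq_mul]
      rw [dotProduct_comm x (b i)]
      have := hc i
      nlinarith [sq_nonneg (b i ⬝ᵥ x)]
  exact Finset.sum_induction _ Matrix.PosSemidef (fun a b ha hb => ha.add hb)
    Matrix.PosSemidef.zero (fun i _ => key i)

lemma sum_mulVec' {n p : ℕ} (M : Fin p → Matrix (Fin n) (Fin n) ℝ) (v : Fin n → ℝ) :
    (∑ i, M i).mulVec v = ∑ i, (M i).mulVec v := by
  ext j
  simp only [Matrix.mulVec, dotProduct, Finset.sum_apply, Matrix.sum_apply,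
    Finset.sum_mul]
  rw [Finset.sum_comm]

lemma inv_inv_smul_mat {n : ℕ} (S : Matrix (Fin n) (Fin n) ℝ) (hS : IsUnit S.det) {c : ℝ}
    (hc : c ≠ 0) : (c⁻¹ • S)⁻¹ = c • S⁻¹ := by
  have : Invertible c⁻¹ := invertibleOfNonzero (inv_ne_zero hc)
  have h1 : (c⁻¹ • S)⁻¹ = ⅟(c⁻¹) • S⁻¹ := Matrix.inv_smul (A := S) (k := c⁻¹) hS
  rw [h1, invOf_eq_inv, inv_inv]

lemma dotProduct_sum' {n p : ℕ} (u : Fin n → ℝ) (w : Fin p → Fin n → ℝ) :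
    u ⬝ᵥ (∑ i, w i) = ∑ i, u ⬝ᵥ w i := by
  simp only [dotProduct, Finset.sum_apply, Finset.mul_sum]
  rw [Finset.sum_comm]

lemma key {n p : ℕ} (R S : Matrix (Fin n) (Fin n) ℝ) (hR : R.PosDef)
    (b : Fin p → Fin n → ℝ) (x : Fin p → ℝ) (hx : ∀ i, 0 ≤ x i)
    (hb1 : ∀ i, b i ⬝ᵥ (R⁻¹).mulVec (b i) = 1)
    (hS : S = R + ∑ i, x i • vecMulVec (b i) (b i))
    (y : Fin n → ℝ) (hyb : y = ∑ i, x i • b i)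
    (ε : ℝ) (hε : 0 ≤ ε) (hy : Qnorm R⁻¹ y ≤ ε)
    (v : Fin n → ℝ) :
    ∃ μ : Fin p → ℝ, (∀ i, 0 ≤ μ i) ∧
      Qnorm R⁻¹ (v + ∑ i, μ i • b i) ≤ (1 + ε) * Real.sqrt (v ⬝ᵥ (S⁻¹).mulVec v) := by
  have hQ : (R⁻¹).PosDef := hR.inv
  have hRdet : IsUnit R.det := isUnit_iff_ne_zero.mpr hR.det_pos.ne'
  have hSpd : S.PosDef := by
    rw [hS]; exact hR.add_posSemidef (psd_sum_vecMulVec x hx b)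
  have hSdet : IsUnit S.det := isUnit_iff_ne_zero.mpr hSpd.det_pos.ne'
  set u := (S⁻¹).mulVec v with hu
  have hvu : S.mulVec u = v := by
    rw [hu, Matrix.mulVec_mulVec, Matrix.mul_nonsing_inv _ hSdet, Matrix.one_mulVec]
  have hQRu : (R⁻¹).mulVec (R.mulVec u) = u := by
    rw [Matrix.mulVec_mulVec, Matrix.nonsing_inv_mul _ hRdet, Matrix.one_mulVec]
  have hSu : S.mulVec u = R.mulVec u + ∑ i, (x i * (b i ⬝ᵥ u)) • b i := by
    rw [hS, Matrix.add_mulVec, sum_mulVec']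
    congr 1
    refine Finset.sum_congr rfl fun i _ => ?_
    rw [Matrix.smul_mulVec, mulVec_vecMulVec, smul_smul]
  have hquad : u ⬝ᵥ S.mulVec u = u ⬝ᵥ R.mulVec u + ∑ i, x i * (b i ⬝ᵥ u) ^ 2 := by
    rw [hSu, dotProduct_add, dotProduct_sum']
    congr 1
    refine Finset.sum_congr rfl fun i _ => ?_
    rw [dotProduct_smul, smul_eq_mul, dotProduct_comm]
    ring
  have huR : 0 ≤ u ⬝ᵥ R.mulVec u := psd_nonneg hR.posSemidef u
  set c := Real.sqrt (u ⬝ᵥ R.mulVec u) with hc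
  have hcnn : 0 ≤ c := Real.sqrt_nonneg _
  have hc2 : c ^ 2 = u ⬝ᵥ R.mulVec u := Real.sq_sqrt huR
  have hwQw : (R.mulVec u) ⬝ᵥ (R⁻¹).mulVec (R.mulVec u) = u ⬝ᵥ R.mulVec u := by
    rw [hQRu, dotProduct_comm]
  have hbu : ∀ i, b i ⬝ᵥ u ≤ c := by
    intro i
    have h2 := cauchySchwarz hQ.posSemidef (b i) (R.mulVec u)
    rw [hb1 i, one_mul, hwQw, hQRu] at h2
    nlinarith [h2, hcnn, hc2]
  refine ⟨fun i => x i * (c - b i ⬝ᵥ u), fun i =>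
    mul_nonneg (hx i) (sub_nonneg.mpr (hbu i)), ?_⟩
  have hsum : v + ∑ i, (x i * (c - b i ⬝ᵥ u)) • b i = R.mulVec u + c • y := by
    rw [← hvu, hSu, add_assoc, hyb, Finset.smul_sum]
    congr 1
    rw [← Finset.sum_add_distrib]
    refine Finset.sum_congr rfl fun i _ => ?_
    rw [smul_smul, ← add_smul]
    congr 1
    ring
  rw [hsum]
  -- bound the Q-norm of R.mulVec u + c • y
  have hyQ : 0 ≤ y ⬝ᵥ (R⁻¹).mulVec y := psd_nonneg hQ.posSemidef y
  have hyn : Real.sqrt (y ⬝ᵥ (R⁻¹).mulVec y) ≤ ε := hy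
  have hyQy : y ⬝ᵥ (R⁻¹).mulVec y ≤ ε ^ 2 := by
    have := Real.sq_sqrt hyQ
    nlinarith [hyn, Real.sqrt_nonneg (y ⬝ᵥ (R⁻¹).mulVec y)]
  have hcross : (R.mulVec u) ⬝ᵥ (R⁻¹).mulVec y ≤ c * ε := by
    have h2 := cauchySchwarz hQ.posSemidef (R.mulVec u) y
    rw [hwQw] at h2
    have h3 : (R.mulVec u) ⬝ᵥ (R⁻¹).mulVec y ≤
        Real.sqrt ((u ⬝ᵥ R.mulVec u) * (y ⬝ᵥ (R⁻¹).mulVec y)) := by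
      calc (R.mulVec u) ⬝ᵥ (R⁻¹).mulVec y
          ≤ |(R.mulVec u) ⬝ᵥ (R⁻¹).mulVec y| := le_abs_self _
        _ = Real.sqrt (((R.mulVec u) ⬝ᵥ (R⁻¹).mulVec y) ^ 2) := (Real.sqrt_sq_eq_abs _).symm
        _ ≤ _ := Real.sqrt_le_sqrt h2
    calc (R.mulVec u) ⬝ᵥ (R⁻¹).mulVec y ≤ _ := h3
      _ = c * Real.sqrt (y ⬝ᵥ (R⁻¹).mulVec y) := by
          rw [Real.sqrt_mul huR]
      _ ≤ c * ε := mul_le_mul_of_nonneg_left hyn hcnn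
  have hexp : (R.mulVec u + c • y) ⬝ᵥ (R⁻¹).mulVec (R.mulVec u + c • y)
      = (u ⬝ᵥ R.mulVec u) + 2 * c * ((R.mulVec u) ⬝ᵥ (R⁻¹).mulVec y)
        + c ^ 2 * (y ⬝ᵥ (R⁻¹).mulVec y) := by
    have hsym : (R⁻¹)ᵀ = R⁻¹ := pd_transpose hQ
    rw [Matrix.mulVec_add, dotProduct_add, add_dotProduct,
      add_dotProduct, Matrix.mulVec_smul, dotProduct_smul,
      smul_dotProduct, smul_dotProduct, dotProduct_smul,
      dotSymm hsym y (R.mulVec u), hwQw]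
    simp only [smul_eq_mul]
    ring
  have hle : (R.mulVec u + c • y) ⬝ᵥ (R⁻¹).mulVec (R.mulVec u + c • y)
      ≤ ((1 + ε) * c) ^ 2 := by
    rw [hexp]
    nlinarith [hcross, hyQy, hc2, hcnn, mul_le_mul_of_nonneg_left hyQy (sq_nonneg c)]
  have hquadv : v ⬝ᵥ (S⁻¹).mulVec v = u ⬝ᵥ S.mulVec u := by
    rw [← hu, dotProduct_comm, ← hvu]
  have hrhs : (1 + ε) * c ≤ (1 + ε) * Real.sqrt (v ⬝ᵥ (S⁻¹).mulVec v) := by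
    have h1 : u ⬝ᵥ R.mulVec u ≤ v ⬝ᵥ (S⁻¹).mulVec v := by
      rw [hquadv, hquad]
      have : 0 ≤ ∑ i, x i * (b i ⬝ᵥ u) ^ 2 :=
        Finset.sum_nonneg fun i _ => mul_nonneg (hx i) (sq_nonneg _)
      linarith
    have := Real.sqrt_le_sqrt h1
    have h1e : (0:ℝ) ≤ 1 + ε := by linarith
    exact mul_le_mul_of_nonneg_left (by rw [hc]; exact this) h1e
  refine le_trans ?_ hrhs
  unfold Qnorm
  have h1e : (0:ℝ) ≤ (1 + ε) * c := mul_nonneg (by linarith) hcnn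
  calc Real.sqrt ((R.mulVec u + c • y) ⬝ᵥ (R⁻¹).mulVec (R.mulVec u + c • y))
      ≤ Real.sqrt (((1 + ε) * c) ^ 2) := Real.sqrt_le_sqrt hle
    _ = (1 + ε) * c := by rw [Real.sqrt_sq h1e]

/-- The pull-back lemma: if `y = ∑_i x_i a_i/‖a_i‖_Q` has `‖y‖_Q ≤ ε`, then `R'`
is symmetric positive definite, and for every `v ∈ ℝⁿ` there exists `ν ≥ 0` with
`‖v + Aν‖_Q ≤ ‖v‖_{Q'}`, where `Q' = (R')⁻¹`. -/
theorem pullback {n p : ℕ} (hp : 1 ≤ p)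
    (A : Matrix (Fin n) (Fin p) ℝ)
    (hA : ∀ i : Fin p, (fun j => A j i) ≠ (0 : Fin n → ℝ))
    (R : Matrix (Fin n) (Fin n) ℝ) (hR : R.PosDef)
    (ε : ℝ) (hε : 0 ≤ ε)
    (x : Fin p → ℝ) (hx : ∀ i, 0 ≤ x i)
    (hy : Qnorm R⁻¹
      (fun j => ∑ i, x i * A j i / Qnorm R⁻¹ (fun j' => A j' i)) ≤ ε) :
    (rescaledR A R ε x).PosDef ∧
    ∀ v : Fin n → ℝ, ∃ ν : Fin p → ℝ, (∀ i, 0 ≤ ν i) ∧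
      Qnorm R⁻¹ (v + A.mulVec ν) ≤ Qnorm (rescaledR A R ε x)⁻¹ v := by
  have h1ε : (0:ℝ) < 1 + ε := by linarith
  have hQ : (R⁻¹).PosDef := hR.inv
  have hna : ∀ i : Fin p, 0 < Qnorm R⁻¹ (fun j => A j i) := by
    intro i
    have h1 : 0 < (fun j => A j i) ⬝ᵥ (R⁻¹).mulVec (fun j => A j i) := by
      simpa using hQ.dotProduct_mulVec_pos (hA i)
    unfold Qnorm
    exact Real.sqrt_pos.mpr h1
  have hna_sq : ∀ i : Fin p, (fun j => A j i) ⬝ᵥ (R⁻¹).mulVec (fun j => A j i)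
      = (Qnorm R⁻¹ (fun j => A j i)) ^ 2 := by
    intro i
    unfold Qnorm
    rw [Real.sq_sqrt (psd_nonneg hQ.posSemidef _)]
  set b : Fin p → Fin n → ℝ :=
    fun i => (Qnorm R⁻¹ (fun j => A j i))⁻¹ • (fun j => A j i) with hb
  have hb1 : ∀ i, b i ⬝ᵥ (R⁻¹).mulVec (b i) = 1 := by
    intro i
    rw [hb]
    simp only [Matrix.mulVec_smul, smul_dotProduct, dotProduct_smul,
      smul_eq_mul]
    rw [hna_sq i]
    have hni : Qnorm R⁻¹ (fun j => A j i) ≠ 0 := (hna i).ne'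
    generalize hgen : Qnorm R⁻¹ (fun j => A j i) = t at hni ⊢
    field_simp
  set S : Matrix (Fin n) (Fin n) ℝ := R + ∑ i, x i • vecMulVec (b i) (b i) with hS
  have hrs : rescaledR A R ε x = ((1 + ε) ^ 2)⁻¹ • S := by
    rw [hS]
    unfold rescaledR
    congr 1
    congr 1
    refine Finset.sum_congr rfl fun i _ => ?_
    ext j k
    rw [hb]
    simp only [Matrix.smul_apply, Matrix.vecMulVec_apply, Pi.smul_apply, smul_eq_mul]
    have hni : Qnorm R⁻¹ (fun j => A j i) ≠ 0 := (hna i).ne'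
    generalize hgen : Qnorm R⁻¹ (fun j => A j i) = t at hni ⊢
    rw [div_eq_mul_inv]
    ring
  have hSpd : S.PosDef := by rw [hS]; exact hR.add_posSemidef (psd_sum_vecMulVec x hx b)
  have hSdet : IsUnit S.det := isUnit_iff_ne_zero.mpr hSpd.det_pos.ne'
  have hR'pd : (rescaledR A R ε x).PosDef := by
    rw [hrs]
    exact smul_posDef hSpd (by positivity)
  refine ⟨hR'pd, fun v => ?_⟩
  have hyb : (fun j => ∑ i, x i * A j i / Qnorm R⁻¹ (fun j' => A j' i)) = ∑ i, x i • b i := by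
    funext j
    rw [Finset.sum_apply]
    refine Finset.sum_congr rfl fun i _ => ?_
    rw [hb]
    simp only [Pi.smul_apply, smul_eq_mul, div_eq_mul_inv]
    ring
  obtain ⟨μ, hμ, hle⟩ := key R S hR b x hx hb1 hS
    (fun j => ∑ i, x i * A j i / Qnorm R⁻¹ (fun j' => A j' i)) hyb ε hε hy v
  refine ⟨fun i => μ i / Qnorm R⁻¹ (fun j => A j i),
    fun i => div_nonneg (hμ i) (hna i).le, ?_⟩
  have hAν : A.mulVec (fun i => μ i / Qnorm R⁻¹ (fun j => A j i)) = ∑ i, μ i • b i := by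
    funext j
    rw [Finset.sum_apply]
    simp only [Matrix.mulVec, dotProduct]
    refine Finset.sum_congr rfl fun i _ => ?_
    rw [hb]
    simp only [Pi.smul_apply, smul_eq_mul, div_eq_mul_inv]
    ring
  rw [hAν]
  refine le_trans hle ?_
  rw [hrs, inv_inv_smul_mat S hSdet (by positivity)]
  unfold Qnorm
  rw [Matrix.smul_mulVec, dotProduct_smul, smul_eq_mul,
    Real.sqrt_mul (by positivity), Real.sqrt_sq h1ε.le]
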